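/- There exists a simple graph G on 6 vertices such that neither G nor its complement contains a trail with 9 vertices. (Together with the upper-bound direction, this shows R(T_9, T_9) = R(T_10, T_10) = 7.) -/

import Mathlib

/-- A graph `G` contains a trail with `k` vertices (counted with multiplicity),
i.e., a walk of length `k - 1` whose edges are pairwise distinct. -/
def HasTrailWithVertices {V : Type*} (G : SimpleGraph V) (k : ℕ) : Prop :=
  ∃ (u v : V) (p : G.Walk u v), p.IsTrail ∧ p.length + 1 = k

/-- The complete bipartite-like graph `K_{3,3}` on `Fin 6`, with parts the even
and odd residues. -/
def myG : SimpleGraph (Fin 6) where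
  Adj a b := a.val % 2 ≠ b.val % 2
  symm := ⟨by intro a b h; exact h.symm⟩
  loopless := ⟨by intro a h; exact h rfl⟩

instance : DecidableRel myG.Adj := fun a b => by unfold myG; infer_instance

/-- `myG` with the single edge `e` deleted. -/
def myGdel (e : Sym2 (Fin 6)) : SimpleGraph (Fin 6) where
  Adj a b := myG.Adj a b ∧ s(a, b) ≠ e
  symm := ⟨by
    intro a b h
    exact ⟨h.1.symm, by rw [Sym2.eq_swap]; exact h.2⟩⟩
  loopless := ⟨by intro a h; exact myG.loopless.irrefl a h.1⟩

instance (e : Sym2 (Fin 6)) : DecidableRel (myGdel e).Adj := fun a b => by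
  unfold myGdel; exact instDecidableAnd

lemma myGdel_odd (e : Sym2 (Fin 6)) (he : e ∈ myG.edgeFinset) :
    ((Finset.univ : Finset (Fin 6)).filter
      fun v => Odd ((myGdel e).degree v)).card = 4 := by
  revert he; revert e; decide

lemma myG_card_edges : myG.edgeFinset.card = 9 := by decide

lemma myGc_card_edges : myGᶜ.edgeFinset.card = 6 := by decide

/-- There is a simple graph `G` on 6 vertices such that neither `G` nor its
complement contains a trail with 9 vertices. -/
theorem no_trail9_on_six_vertices :
    ∃ G : SimpleGraph (Fin 6),
      ¬ HasTrailWithVertices G 9 ∧ ¬ HasTrailWithVertices Gᶜ 9 := by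
  refine ⟨myG, ?_, ?_⟩
  · rintro ⟨u, v, p, ht, hl⟩
    have hlen : p.edges.length = 8 := by
      have := p.length_edges
      omega
    set E : Finset (Sym2 (Fin 6)) := p.edges.toFinset with hE
    have hEcard : E.card = 8 := by
      rw [hE, List.toFinset_card_of_nodup ht.edges_nodup, hlen]
    have hEsub : E ⊆ myG.edgeFinset := by
      intro f hf
      rw [hE, List.mem_toFinset] at hf
      exact SimpleGraph.mem_edgeFinset.mpr (p.edges_subset_edgeSet hf)
    -- there is exactly one missing edge
    have hdiff : (myG.edgeFinset \ E).card = 1 := by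
      rw [Finset.card_sdiff_of_subset hEsub, myG_card_edges, hEcard]
    obtain ⟨e, hee⟩ := Finset.card_eq_one.mp hdiff
    have heG : e ∈ myG.edgeFinset := by
      have : e ∈ myG.edgeFinset \ E := by rw [hee]; exact Finset.mem_singleton_self e
      exact (Finset.mem_sdiff.mp this).1
    have heE : e ∉ E := by
      have : e ∈ myG.edgeFinset \ E := by rw [hee]; exact Finset.mem_singleton_self e
      exact (Finset.mem_sdiff.mp this).2
    -- transfer the walk to the graph with `e` deleted
    have hsub : ∀ f ∈ p.edges, f ∈ (myGdel e).edgeSet := by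
      intro f hf
      have hfE : f ∈ E := by rw [hE, List.mem_toFinset]; exact hf
      have hfG : f ∈ myG.edgeSet := p.edges_subset_edgeSet hf
      have hfne : f ≠ e := fun h => heE (h ▸ hfE)
      induction f with
      | h a b => exact ⟨hfG, hfne⟩
    set q : (myGdel e).Walk u v := p.transfer (myGdel e) hsub with hq
    have hqe : q.edges = p.edges := p.edges_transfer hsub
    have hqt : q.IsTrail := ⟨by rw [hqe]; exact ht.edges_nodup⟩
    -- edge sets: (myGdel e).edgeFinset = myG.edgeFinset.erase e has card 8
    have hdelsub : (myGdel e).edgeFinset ⊆ myG.edgeFinset.erase e := by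
      intro f hf
      rw [SimpleGraph.mem_edgeFinset] at hf
      induction f with
      | h a b =>
        rcases hf with ⟨h1, h2⟩
        exact Finset.mem_erase.mpr ⟨h2, SimpleGraph.mem_edgeFinset.mpr h1⟩
    have hEsub' : E ⊆ (myGdel e).edgeFinset := by
      intro f hf
      rw [hE, List.mem_toFinset] at hf
      exact SimpleGraph.mem_edgeFinset.mpr (hsub f hf)
    have hdelcard : (myGdel e).edgeFinset.card ≤ 8 := by
      calc (myGdel e).edgeFinset.card ≤ (myG.edgeFinset.erase e).card :=
            Finset.card_le_card hdelsub
        _ = 8 := by rw [Finset.card_erase_of_mem heG, myG_card_edges]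
    have hEeq : E = (myGdel e).edgeFinset :=
      Finset.eq_of_subset_of_card_le hEsub' (by omega)
    have heul : q.IsEulerian := by
      apply hqt.isEulerian_of_forall_mem
      intro f hf
      have : f ∈ E := by
        rw [hEeq]; exact SimpleGraph.mem_edgeFinset.mpr hf
      rw [hqe]
      rw [hE, List.mem_toFinset] at this
      exact this
    have := heul.card_filter_odd_degree rfl
    have h4 := myGdel_odd e heG
    omega
  · rintro ⟨u, v, p, ht, hl⟩
    have hlen : p.edges.length = 8 := by
      have := p.length_edges
      omega
    have hEcard : p.edges.toFinset.card = 8 := by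
      rw [List.toFinset_card_of_nodup ht.edges_nodup, hlen]
    have hEsub : p.edges.toFinset ⊆ myGᶜ.edgeFinset := by
      intro f hf
      rw [List.mem_toFinset] at hf
      exact SimpleGraph.mem_edgeFinset.mpr (p.edges_subset_edgeSet hf)
    have := Finset.card_le_card hEsub
    rw [hEcard, myGc_card_edges] at this
    omega
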